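/- For nonnegative integers n ≤ N and a not a nonpositive integer, the terminating series satisfies the degenerate Pfaff transformation 2F1(-n, a; -N; z) = (1-z)^n · 2F1(-n, -a-N; -N; z/(z-1)), where 2F1(-n, a; -N; z) = ∑_{k=0}^n ((-n)_k(a)_k/((-N)_k k!)) z^k. -/

import Mathlib

open Finset

noncomputable def poch (x : ℂ) (k : ℕ) : ℂ := (ascPochhammer ℂ k).eval x

/-- Terminating Gauss hypergeometric series `2F1(-n, b; c; z)` as a finite sum. -/
noncomputable def hyp (n : ℕ) (b c : ℂ) (z : ℂ) : ℂ :=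
  ∑ k ∈ Finset.range (n + 1),
    poch (-(n : ℂ)) k * poch b k / (poch c k * (Nat.factorial k : ℂ)) * z ^ k

noncomputable def fall (x : ℂ) (k : ℕ) : ℂ := ∏ i ∈ Finset.range k, (x - i)

lemma poch_zero (x : ℂ) : poch x 0 = 1 := by simp [poch]

lemma poch_succ (x : ℂ) (k : ℕ) : poch x (k + 1) = poch x k * (x + k) := by
  simp [poch, ascPochhammer_succ_right]

lemma fall_zero (x : ℂ) : fall x 0 = 1 := by simp [fall]

lemma fall_succ (x : ℂ) (k : ℕ) : fall x (k + 1) = fall x k * (x - k) := by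
  simp [fall, Finset.prod_range_succ]

lemma fall_succ_left (x : ℂ) (k : ℕ) : fall x (k + 1) = x * fall (x - 1) k := by
  induction k with
  | zero => simp [fall]
  | succ k ih =>
    rw [fall_succ, ih, fall_succ, mul_assoc]
    push_cast
    ring_nf

lemma poch_eq_fall (x : ℂ) (k : ℕ) : poch x k = fall (x + k - 1) k := by
  induction k with
  | zero => simp [poch_zero, fall_zero]
  | succ k ih =>
    rw [poch_succ, ih, fall_succ_left]
    push_cast
    ring_nf

lemma poch_neg (x : ℂ) (k : ℕ) : poch x k = (-1) ^ k * fall (-x) k := by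
  induction k with
  | zero => simp [poch_zero, fall_zero]
  | succ k ih =>
    rw [poch_succ, ih, fall_succ]
    ring_nf

lemma fall_natCast {n j : ℕ} (h : j ≤ n) :
    fall (n : ℂ) j = ((j.factorial * n.choose j : ℕ) : ℂ) := by
  induction j with
  | zero => simp [fall_zero]
  | succ j ih =>
    have hj : j ≤ n := Nat.le_of_succ_le h
    rw [fall_succ, ih hj]
    have hnat : (j + 1).factorial * n.choose (j + 1) = j.factorial * n.choose j * (n - j) := by
      rw [Nat.factorial_succ]
      rw [show (j + 1) * j.factorial * n.choose (j + 1) = j.factorial * (n.choose (j + 1) * (j + 1)) from by ring,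
        Nat.choose_succ_right_eq, mul_assoc]
    rw [hnat]
    push_cast [Nat.cast_sub hj]
    ring

lemma fall_vdm (x y : ℂ) (k : ℕ) :
    fall (x + y) k = ∑ j ∈ range (k + 1), (k.choose j : ℂ) * fall x j * fall y (k - j) := by
  induction k with
  | zero => simp [fall_zero]
  | succ k ih =>
    rw [fall_succ, ih, Finset.sum_mul]
    have hterm : ∀ j ∈ range (k + 1),
        (k.choose j : ℂ) * fall x j * fall y (k - j) * (x + y - (k : ℂ)) =
          (k.choose j : ℂ) * (fall x (j + 1) * fall y (k - j)) +
          (k.choose j : ℂ) * (fall x j * fall y (k - j + 1)) := by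
      intro j hj
      have hjk : j ≤ k := Nat.lt_succ_iff.mp (Finset.mem_range.mp hj)
      rw [fall_succ, fall_succ]
      have hc : ((k - j : ℕ) : ℂ) = (k : ℂ) - (j : ℂ) := by
        push_cast [Nat.cast_sub hjk]; ring
      rw [hc]
      ring
    rw [Finset.sum_congr rfl hterm, Finset.sum_add_distrib]
    -- RHS target
    rw [Finset.sum_range_succ' (fun j => ((k+1).choose j : ℂ) * fall x j * fall y (k + 1 - j)) (k+1)]
    have h1 : ∀ i ∈ range (k + 1),
        (((k+1).choose (i+1) : ℕ) : ℂ) * fall x (i+1) * fall y (k + 1 - (i+1)) =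
          (k.choose i : ℂ) * (fall x (i+1) * fall y (k - i)) +
          (k.choose (i+1) : ℂ) * (fall x (i+1) * fall y (k - i)) := by
      intro i hi
      have : k + 1 - (i + 1) = k - i := by omega
      rw [this, Nat.choose_succ_succ]
      push_cast
      ring
    rw [Finset.sum_congr rfl h1, Finset.sum_add_distrib]
    have h2 : (∑ j ∈ range (k + 1), (k.choose j : ℂ) * (fall x j * fall y (k - j + 1))) =
        (∑ i ∈ range (k + 1), (k.choose (i+1) : ℂ) * (fall x (i+1) * fall y (k - i))) +
          (((k+1).choose 0 : ℕ) : ℂ) * fall x 0 * fall y (k + 1 - 0) := by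
      have hext : (∑ j ∈ range (k + 2), (k.choose j : ℂ) * (fall x j * fall y (k + 1 - j))) =
          ∑ j ∈ range (k + 1), (k.choose j : ℂ) * (fall x j * fall y (k - j + 1)) := by
        conv_lhs => rw [Finset.sum_range_succ]
        have hz : ((k.choose (k+1) : ℕ) : ℂ) = 0 := by
          simp [Nat.choose_eq_zero_of_lt (Nat.lt_succ_self k)]
        rw [hz]
        simp only [zero_mul, add_zero]
        refine Finset.sum_congr rfl fun j hj => ?_
        have hjk : j ≤ k := Nat.lt_succ_iff.mp (Finset.mem_range.mp hj)
        have : k + 1 - j = k - j + 1 := by omega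
        rw [this]
      rw [← hext, Finset.sum_range_succ' (fun j => (k.choose j : ℂ) * (fall x j * fall y (k + 1 - j))) (k+1)]
      congr 1
      · refine Finset.sum_congr rfl fun i hi => ?_
        have : k + 1 - (i + 1) = k - i := by omega
        rw [this]
      · simp [fall_zero]
    rw [h2]
    ring

lemma poch_add_split (x : ℂ) (j m : ℕ) : poch x (j + m) = poch x j * poch (x + j) m := by
  induction m with
  | zero => simp [poch_zero]
  | succ m ih =>
    rw [← Nat.add_assoc, poch_succ, ih, poch_succ]
    push_cast
    ring

lemma poch_split (x : ℂ) {j k : ℕ} (h : j ≤ k) :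
    poch x k = poch x j * poch (x + j) (k - j) := by
  conv_lhs => rw [← Nat.add_sub_cancel' h]
  exact poch_add_split x j (k - j)

lemma chu (a : ℂ) (N : ℕ) (k : ℕ) :
    ∑ j ∈ range (k + 1),
      (-1 : ℂ) ^ j * (k.choose j : ℂ) * poch (-a - N) j * poch (-(N : ℂ) + j) (k - j)
      = poch a k := by
  have h : ∀ j ∈ range (k + 1),
      (-1 : ℂ) ^ j * (k.choose j : ℂ) * poch (-a - N) j * poch (-(N : ℂ) + j) (k - j)
        = (k.choose j : ℂ) * fall (a + N) j * fall ((k : ℂ) - N - 1) (k - j) := by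
    intro j hj
    have hjk : j ≤ k := Nat.lt_succ_iff.mp (Finset.mem_range.mp hj)
    rw [poch_neg (-a - N) j, poch_eq_fall]
    have h1 : -(-a - (N : ℂ)) = a + N := by ring
    have h2 : (-(N : ℂ) + j + ((k - j : ℕ) : ℂ) - 1) = (k : ℂ) - N - 1 := by
      push_cast [Nat.cast_sub hjk]; ring
    rw [h1, h2]
    have hsq : ((-1 : ℂ) ^ j) * ((-1 : ℂ) ^ j) = 1 := by
      rw [← pow_add]
      exact Even.neg_one_pow ⟨j, rfl⟩
    linear_combination ((k.choose j : ℂ) * fall (a + N) j * fall ((k : ℂ) - N - 1) (k - j)) * hsq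
  rw [Finset.sum_congr rfl h, ← fall_vdm, poch_eq_fall]
  congr 1
  ring

lemma fall_nat_ne_zero {N j : ℕ} (h : j ≤ N) : fall (N : ℂ) j ≠ 0 := by
  rw [fall_natCast h]
  exact Nat.cast_ne_zero.mpr (Nat.mul_ne_zero (Nat.factorial_ne_zero j) (Nat.choose_pos h).ne')

lemma poch_negN_ne_zero {N j : ℕ} (h : j ≤ N) : poch (-(N : ℂ)) j ≠ 0 := by
  rw [poch_neg, neg_neg]
  exact mul_ne_zero (pow_ne_zero _ (by norm_num)) (fall_nat_ne_zero h)

lemma poch_neg_nat {n j : ℕ} (h : j ≤ n) :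
    poch (-(n : ℂ)) j = (-1) ^ j * ((j.factorial * n.choose j : ℕ) : ℂ) := by
  rw [poch_neg, neg_neg, fall_natCast h]

theorem pfaff_degenerate (n N : ℕ) (hnN : n ≤ N) (a : ℂ)
    (ha : ∀ m : ℕ, a ≠ -(m : ℂ)) (z : ℂ) (hz : z ≠ 1) :
    hyp n a (-(N : ℂ)) z = (1 - z) ^ n * hyp n (-a - N) (-(N : ℂ)) (z / (z - 1)) := by
  have hz1 : z - 1 ≠ 0 := sub_ne_zero.mpr hz
  unfold hyp
  rw [Finset.mul_sum]
  have hstep : ∀ j ∈ range (n + 1),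
      (1 - z) ^ n * (poch (-(n : ℂ)) j * poch (-a - N) j /
          (poch (-(N : ℂ)) j * (j.factorial : ℂ)) * (z / (z - 1)) ^ j) =
      ∑ i ∈ range (n + 1 - j),
        (poch (-(n : ℂ)) j * poch (-a - N) j / (poch (-(N : ℂ)) j * (j.factorial : ℂ)))
          * (-1) ^ j * z ^ j * ((-z) ^ i * ((n - j).choose i : ℂ)) := by
    intro j hj
    have hjn : j ≤ n := Nat.lt_succ_iff.mp (Finset.mem_range.mp hj)
    have key : (1 - z) ^ n * (z / (z - 1)) ^ j = (-1) ^ j * z ^ j * (1 - z) ^ (n - j) := by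
      have hp : (1 - z) ^ n = (1 - z) ^ (n - j) * (1 - z) ^ j := by
        rw [← pow_add, Nat.sub_add_cancel hjn]
      have h1 : (1 - z) ^ j = (-1) ^ j * (z - 1) ^ j := by
        rw [← mul_pow]; congr 1; ring
      rw [hp, h1, div_pow]
      field_simp
    have hbin : (1 - z) ^ (n - j) =
        ∑ i ∈ range (n + 1 - j), (-z) ^ i * ((n - j).choose i : ℂ) := by
      have : (1 : ℂ) - z = -z + 1 := by ring
      rw [this, add_pow]
      have hr : n - j + 1 = n + 1 - j := by omega
      rw [hr]
      refine Finset.sum_congr rfl fun i _ => ?_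
      ring
    calc (1 - z) ^ n * (poch (-(n : ℂ)) j * poch (-a - N) j /
          (poch (-(N : ℂ)) j * (j.factorial : ℂ)) * (z / (z - 1)) ^ j)
        = (poch (-(n : ℂ)) j * poch (-a - N) j / (poch (-(N : ℂ)) j * (j.factorial : ℂ)))
            * ((1 - z) ^ n * (z / (z - 1)) ^ j) := by ring
      _ = (poch (-(n : ℂ)) j * poch (-a - N) j / (poch (-(N : ℂ)) j * (j.factorial : ℂ)))
            * ((-1) ^ j * z ^ j * ∑ i ∈ range (n + 1 - j), (-z) ^ i * ((n - j).choose i : ℂ)) := by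
          rw [key, hbin]
      _ = _ := by
          simp only [Finset.mul_sum]
          refine Finset.sum_congr rfl fun i _ => ?_
          ring
  rw [Finset.sum_congr rfl hstep,
    ← Finset.sum_range_diag_flip (n + 1) (fun j i =>
      (poch (-(n : ℂ)) j * poch (-a - N) j / (poch (-(N : ℂ)) j * (j.factorial : ℂ)))
        * (-1) ^ j * z ^ j * ((-z) ^ i * ((n - j).choose i : ℂ)))]
  refine Finset.sum_congr rfl fun k hk => ?_
  have hkn : k ≤ n := Nat.lt_succ_iff.mp (Finset.mem_range.mp hk)
  have hkN : k ≤ N := hkn.trans hnN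
  have hQk : poch (-(N : ℂ)) k ≠ 0 := poch_negN_ne_zero hkN
  have hterm : ∀ j ∈ range (k + 1),
      poch (-(n : ℂ)) j * poch (-a - N) j / (poch (-(N : ℂ)) j * (j.factorial : ℂ))
          * (-1) ^ j * z ^ j * ((-z) ^ (k - j) * ((n - j).choose (k - j) : ℂ)) =
      ((n.choose k : ℂ) / poch (-(N : ℂ)) k * ((-1) ^ k * z ^ k)) *
        ((-1) ^ j * (k.choose j : ℂ) * poch (-a - N) j * poch (-(N : ℂ) + j) (k - j)) := by
    intro j hj
    have hjk : j ≤ k := Nat.lt_succ_iff.mp (Finset.mem_range.mp hj)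
    have hjn : j ≤ n := hjk.trans hkn
    have hjN : j ≤ N := hjn.trans hnN
    have hQj : poch (-(N : ℂ)) j ≠ 0 := poch_negN_ne_zero hjN
    have hfj : (j.factorial : ℂ) ≠ 0 := Nat.cast_ne_zero.mpr (Nat.factorial_ne_zero j)
    have hsplitN : poch (-(N : ℂ)) k = poch (-(N : ℂ)) j * poch (-(N : ℂ) + j) (k - j) :=
      poch_split _ hjk
    have hRj : poch (-(N : ℂ) + j) (k - j) ≠ 0 := by
      intro h0
      exact hQk (by rw [hsplitN, h0, mul_zero])
    have hch : ((n.choose k : ℕ) : ℂ) * ((k.choose j : ℕ) : ℂ)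
        = ((n.choose j : ℕ) : ℂ) * (((n - j).choose (k - j) : ℕ) : ℂ) := by
      rw [← Nat.cast_mul, ← Nat.cast_mul, Nat.choose_mul hjk]
    have e1 : (-z) ^ (k - j) = (-1) ^ (k - j) * z ^ (k - j) := by
      rw [← mul_pow]; congr 1; ring
    have e2 : ((-1 : ℂ)) ^ j * (-1) ^ (k - j) = (-1) ^ k := by
      rw [← pow_add, Nat.add_sub_cancel' hjk]
    have e3 : z ^ j * z ^ (k - j) = z ^ k := by
      rw [← pow_add, Nat.add_sub_cancel' hjk]
    have hsq : ((-1 : ℂ) ^ j) * ((-1 : ℂ) ^ j) = 1 := by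
      rw [← pow_add]; exact Even.neg_one_pow ⟨j, rfl⟩
    have hpn := poch_neg_nat hjn
    rw [hpn, e1, hsplitN, ← e2, ← e3]
    field_simp
    push_cast
    linear_combination (-((j.factorial : ℂ) * poch (-a - ↑N) j * z ^ j * z ^ (k - j))) * hch
  rw [Finset.sum_congr rfl hterm, ← Finset.mul_sum, chu, poch_neg_nat hkn]
  have hfk : (k.factorial : ℂ) ≠ 0 := Nat.cast_ne_zero.mpr (Nat.factorial_ne_zero k)
  field_simp
  push_cast
  ring
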